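/- Nilpotent case: if (g, σ, Ω) is a symplectic triple with [g,g] abelian, split, and the Lie algebra g is nilpotent, then the triple is flat, i.e. k = [p,p] = 0 acts trivially — every nilpotent HI split symplectic symmetric space is flat. -/

import Mathlib

/-- a nilpotent holonomy isotropic split symplectic symmetric space is
flat: if the symplectic triple `(g, σ, Ω)` has `[g,g]` abelian, the extension
`0 → [g,g] → g → g/[g,g] → 0` splits (with abelian complement `a ⊆ P`), and `g` is a
nilpotent Lie algebra, then `K = [P,P] = 0`. -/
theorem nilpotent_HI_split_is_flat
    (g : Type*) [LieRing g] [LieAlgebra ℝ g] [FiniteDimensional ℝ g]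
    (K P : Submodule ℝ g)
    (Ω : g →ₗ[ℝ] g →ₗ[ℝ] ℝ)
    (hcompl : IsCompl K P)
    (hkk : ∀ x ∈ K, ∀ y ∈ K, ⁅x, y⁆ ∈ K)
    (hkp : ∀ x ∈ K, ∀ y ∈ P, ⁅x, y⁆ ∈ P)
    (hpp : ∀ x ∈ P, ∀ y ∈ P, ⁅x, y⁆ ∈ K)
    -- `[P,P] = K`
    (hppk : K ≤ Submodule.span ℝ {z : g | ∃ x ∈ P, ∃ y ∈ P, z = ⁅x, y⁆})
    -- faithfulness of the action of `K` on `P`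
    (hfaith : ∀ x ∈ K, (∀ y ∈ P, ⁅x, y⁆ = 0) → x = 0)
    -- `Ω` is a skew 2-cocycle with `ι_K Ω = 0`, nondegenerate on `P`
    (hskew : ∀ x y : g, Ω x y = - Ω y x)
    (hcocycle : ∀ x y z : g, Ω ⁅x, y⁆ z + Ω ⁅y, z⁆ x + Ω ⁅z, x⁆ y = 0)
    (hik : ∀ x ∈ K, ∀ y : g, Ω x y = 0)
    (hnond : ∀ x ∈ P, (∀ y ∈ P, Ω x y = 0) → x = 0)
    -- holonomy isotropic: `[g,g]` abelian
    (hHI : ∀ x y z w : g, ⁅(⁅x, y⁆ : g), (⁅z, w⁆ : g)⁆ = 0)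
    -- split: `a ⊆ P` is an abelian subalgebra complementary to `[g,g]`
    (a : LieSubalgebra ℝ g)
    (haP : a.toSubmodule ≤ P)
    (hab : ∀ x ∈ a, ∀ y ∈ a, ⁅x, y⁆ = (0 : g))
    (hsplit : IsCompl (Submodule.span ℝ {z : g | ∃ x y : g, z = ⁅x, y⁆}) a.toSubmodule)
    -- `g` is nilpotent
    (hnilp : LieRing.IsNilpotent g) :
    K = ⊥ := by
  set D : Submodule ℝ g := Submodule.span ℝ {z : g | ∃ x y : g, z = ⁅x, y⁆} with hDdef
  -- every element of g decomposes as d + α with d ∈ D, α ∈ a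
  have hdecomp : ∀ y : g, ∃ d ∈ D, ∃ α ∈ a.toSubmodule, y = d + α := by
    intro y
    have htop : D ⊔ a.toSubmodule = ⊤ := hsplit.codisjoint.eq_top
    have : y ∈ D ⊔ a.toSubmodule := htop ▸ Submodule.mem_top
    rcases Submodule.mem_sup.mp this with ⟨d, hd, α, hα, h⟩
    exact ⟨d, hd, α, hα, h.symm⟩
  -- [D, D] = 0
  have hDD : ∀ x ∈ D, ∀ y ∈ D, ⁅x, y⁆ = (0 : g) := by
    intro x hx
    have key : ∀ u v : g, ∀ y ∈ D, ⁅(⁅u, v⁆ : g), y⁆ = 0 := by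
      intro u v y hy
      induction hy using Submodule.span_induction with
      | mem z hz => obtain ⟨s, t, rfl⟩ := hz; exact hHI u v s t
      | zero => simp
      | add p q _ _ hp hq => rw [lie_add, hp, hq, add_zero]
      | smul c p _ hp => rw [lie_smul, hp, smul_zero]
    intro y hy
    induction hx using Submodule.span_induction with
    | mem z hz => obtain ⟨u, v, rfl⟩ := hz; exact key u v y hy
    | zero => simp
    | add p q _ _ hp hq => rw [add_lie, hp, hq, add_zero]
    | smul c p _ hp => rw [smul_lie, hp, smul_zero]
  -- D is contained in every term of the lower central series
  have hlcs : ∀ m : ℕ, ∀ w ∈ D, w ∈ LieModule.lowerCentralSeries ℝ g g m := by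
    intro m
    induction m with
    | zero => intro w _; simp
    | succ m ih =>
      intro w hw
      rw [LieModule.lowerCentralSeries_succ]
      -- show the generators of D are in ⁅⊤, lcs m⁆
      induction hw using Submodule.span_induction with
      | mem z hz =>
        obtain ⟨u, v, rfl⟩ := hz
        obtain ⟨du, hdu, αu, hαu, hu⟩ := hdecomp u
        obtain ⟨dv, hdv, αv, hαv, hv⟩ := hdecomp v
        have h1 : ⁅u, v⁆ = ⁅du, αv⁆ + ⁅αu, dv⁆ := by
          rw [hu, hv, add_lie, lie_add, lie_add, hDD du hdu dv hdv,
            hab αu hαu αv hαv, zero_add, add_zero]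
        rw [h1]
        have h2 : ⁅du, αv⁆ = -⁅αv, du⁆ := (lie_skew du αv).symm
        have m1 : ⁅αv, du⁆ ∈ ⁅(⊤ : LieIdeal ℝ g), LieModule.lowerCentralSeries ℝ g g m⁆ :=
          LieSubmodule.lie_mem_lie (LieSubmodule.mem_top αv) (ih du hdu)
        have m2 : ⁅αu, dv⁆ ∈ ⁅(⊤ : LieIdeal ℝ g), LieModule.lowerCentralSeries ℝ g g m⁆ :=
          LieSubmodule.lie_mem_lie (LieSubmodule.mem_top αu) (ih dv hdv)
        rw [h2]
        exact add_mem (neg_mem m1) m2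
      | zero => simp
      | add p q _ _ hp hq => exact add_mem hp hq
      | smul c p _ hp => exact Submodule.smul_mem _ c hp
  -- nilpotency forces D = ⊥, i.e. all brackets vanish
  obtain ⟨k, hk⟩ := (LieModule.isNilpotent_iff ℝ g g).mp hnilp
  have hzero : ∀ x y : g, ⁅x, y⁆ = (0 : g) := by
    intro x y
    have : ⁅x, y⁆ ∈ LieModule.lowerCentralSeries ℝ g g k :=
      hlcs k _ (Submodule.subset_span ⟨x, y, rfl⟩)
    rw [hk] at this
    exact this
  -- hence K ≤ span {0} = ⊥
  refine le_bot_iff.mp (le_trans hppk ?_)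
  rw [Submodule.span_le]
  rintro z ⟨x, _, y, _, rfl⟩
  simp [hzero x y]
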